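/- Let α₁, β₁ ∈ ℝ with β₁ ≠ 0 and define L₁ and L₂ as the explicit polynomials L₁ = 16iβ₁⁴x² + 16iα₁²β₁²x² − 128iβ₁⁶xt + 128iβ₁²α₁⁴xt + 8β₁²x + 96tα₁²β₁² + 256iβ₁²t²α₁⁶ − 3i + 256iβ₁⁸t² and L₂ = 16iα₁²β₁²x² + 16iβ₁⁴x² + 128iβ₁²α₁⁴xt − 128iβ₁⁶xt − 8β₁²x + 256iβ₁²t²α₁⁶ + 256iβ₁⁸t² − 32tα₁²β₁² + i + 64tβ₁⁴. Then the function q(x,t) = −(L₁/L₂)·2β₁ exp( −2iα₁²(x + 2tα₁² − 4tβ₁²) ) satisfies the DNLSII equation i q_t + q_xx + i|q|² q_x = 0 wherever L₂ ≠ 0. -/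

import Mathlib

open Complex

noncomputable def px (q : ℝ → ℝ → ℂ) : ℝ → ℝ → ℂ :=
  fun x t => deriv (fun x' => q x' t) x

noncomputable def pt (q : ℝ → ℝ → ℂ) : ℝ → ℝ → ℂ :=
  fun x t => deriv (fun t' => q x t') t

noncomputable def rwP1 (a b z s : ℂ) : ℂ :=
  16 * Complex.I * b^4 * z^2 + 16 * Complex.I * a^2 * b^2 * z^2
    - 128 * Complex.I * b^6 * z * s + 128 * Complex.I * b^2 * a^4 * s * z
    + 8 * b^2 * z + 96 * s * a^2 * b^2 + 256 * Complex.I * b^2 * s^2 * a^6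
    - 3 * Complex.I + 256 * Complex.I * b^8 * s^2

noncomputable def rwP2 (a b z s : ℂ) : ℂ :=
  16 * Complex.I * a^2 * b^2 * z^2 + 16 * Complex.I * b^4 * z^2
    + 128 * Complex.I * b^2 * a^4 * z * s - 128 * Complex.I * b^6 * z * s
    - 8 * b^2 * z + 256 * Complex.I * b^2 * s^2 * a^6 + 256 * Complex.I * b^8 * s^2
    - 32 * s * a^2 * b^2 + Complex.I + 64 * s * b^4

noncomputable def rwP1z (a b z s : ℂ) : ℂ :=
  32*Complex.I*b^4*z + 32*Complex.I*a^2*b^2*z - 128*Complex.I*b^6*s + 128*Complex.I*b^2*a^4*s + 8*b^2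

noncomputable def rwP2z (a b z s : ℂ) : ℂ :=
  32*Complex.I*a^2*b^2*z + 32*Complex.I*b^4*z + 128*Complex.I*b^2*a^4*s - 128*Complex.I*b^6*s - 8*b^2

noncomputable def rwP1s (a b z s : ℂ) : ℂ :=
  -(128*Complex.I*b^6*z) + 128*Complex.I*b^2*a^4*z + 96*a^2*b^2 + 512*Complex.I*b^2*s*a^6 + 512*Complex.I*b^8*s

noncomputable def rwP2s (a b z s : ℂ) : ℂ :=
  128*Complex.I*b^2*a^4*z - 128*Complex.I*b^6*z + 512*Complex.I*b^2*s*a^6 + 512*Complex.I*b^8*s - 32*a^2*b^2 + 64*b^4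

noncomputable def rwP1c (a b z s : ℂ) : ℂ :=
  -(16*Complex.I*b^4*z^2) - 16*Complex.I*a^2*b^2*z^2 + 128*Complex.I*b^6*z*s
    - 128*Complex.I*b^2*a^4*s*z + 8*b^2*z + 96*s*a^2*b^2 - 256*Complex.I*b^2*s^2*a^6
    + 3*Complex.I - 256*Complex.I*b^8*s^2

noncomputable def rwP2c (a b z s : ℂ) : ℂ :=
  -(16*Complex.I*a^2*b^2*z^2) - 16*Complex.I*b^4*z^2 - 128*Complex.I*b^2*a^4*z*s
    + 128*Complex.I*b^6*z*s - 8*b^2*z - 256*Complex.I*b^2*s^2*a^6 - 256*Complex.I*b^8*s^2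
    - 32*s*a^2*b^2 - Complex.I + 64*s*b^4

noncomputable def rwE (a b z s : ℂ) : ℂ :=
  Complex.exp (-2 * Complex.I * a^2 * (z + 2 * s * a^2 - 4 * s * b^2))

noncomputable def rwR (a b z s : ℂ) : ℂ := -(rwP1 a b z s / rwP2 a b z s) * 2 * b

noncomputable def rwQ (a b z s : ℂ) : ℂ := rwR a b z s * rwE a b z s

noncomputable def rwRz (a b z s : ℂ) : ℂ :=
  -((rwP1z a b z s * rwP2 a b z s - rwP1 a b z s * rwP2z a b z s) / (rwP2 a b z s)^2) * 2 * b

noncomputable def rwRs (a b z s : ℂ) : ℂ :=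
  -((rwP1s a b z s * rwP2 a b z s - rwP1 a b z s * rwP2s a b z s) / (rwP2 a b z s)^2) * 2 * b

noncomputable def rwRzz (a b z s : ℂ) : ℂ :=
  -((((32*Complex.I*b^4 + 32*Complex.I*a^2*b^2) * rwP2 a b z s
      - rwP1 a b z s * (32*Complex.I*a^2*b^2 + 32*Complex.I*b^4)) * rwP2 a b z s
      - 2 * rwP2z a b z s * (rwP1z a b z s * rwP2 a b z s - rwP1 a b z s * rwP2z a b z s))
      / (rwP2 a b z s)^3) * 2 * b

noncomputable def rwQz (a b z s : ℂ) : ℂ :=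
  (rwRz a b z s + rwR a b z s * (-2*Complex.I*a^2)) * rwE a b z s

noncomputable def rwQt (a b z s : ℂ) : ℂ :=
  (rwRs a b z s + rwR a b z s * (-2*Complex.I*a^2*(2*a^2 - 4*b^2))) * rwE a b z s

noncomputable def rwQzz (a b z s : ℂ) : ℂ :=
  (rwRzz a b z s + 2*(-2*Complex.I*a^2)*rwRz a b z s + (-2*Complex.I*a^2)^2 * rwR a b z s) * rwE a b z s

noncomputable def rwNUM (a b z s : ℂ) : ℂ :=
  Complex.I * ((rwP1s a b z s * rwP2 a b z s - rwP1 a b z s * rwP2s a b z s)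
      + (-2*Complex.I*a^2*(2*a^2 - 4*b^2)) * rwP1 a b z s * rwP2 a b z s) * (rwP2 a b z s * rwP2c a b z s)
  + (((32*Complex.I*b^4 + 32*Complex.I*a^2*b^2) * rwP2 a b z s
      - rwP1 a b z s * (32*Complex.I*a^2*b^2 + 32*Complex.I*b^4)) * rwP2 a b z s
      - 2 * rwP2z a b z s * (rwP1z a b z s * rwP2 a b z s - rwP1 a b z s * rwP2z a b z s)
      + 2*(-2*Complex.I*a^2) * (rwP1z a b z s * rwP2 a b z s - rwP1 a b z s * rwP2z a b z s) * rwP2 a b z s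
      + (-2*Complex.I*a^2)^2 * rwP1 a b z s * (rwP2 a b z s)^2) * rwP2c a b z s
  + 4*Complex.I*b^2 * rwP1 a b z s * rwP1c a b z s
      * ((rwP1z a b z s * rwP2 a b z s - rwP1 a b z s * rwP2z a b z s)
      + (-2*Complex.I*a^2) * rwP1 a b z s * rwP2 a b z s)

lemma hasDerivAt_quadratic (A B C z : ℂ) :
    HasDerivAt (fun w => A*w^2 + B*w + C) (2*A*z + B) z := by
  have h1 : HasDerivAt (fun w : ℂ => A*w^2) (2*A*z) z := by
    have := (hasDerivAt_pow 2 z).const_mul A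
    refine this.congr_deriv ?_
    push_cast; ring
  have h2 : HasDerivAt (fun w : ℂ => B*w) B z := by
    simpa using (hasDerivAt_id z).const_mul B
  exact (h1.add h2).add_const C

lemma hasDerivAt_linear (A B z : ℂ) : HasDerivAt (fun w => A*w + B) A z := by
  have h2 : HasDerivAt (fun w : ℂ => A*w) A z := by
    simpa using (hasDerivAt_id z).const_mul A
  exact h2.add_const B

lemma hasDerivAt_expLin (c d z : ℂ) :
    HasDerivAt (fun w => Complex.exp (c*w + d)) (Complex.exp (c*z + d) * c) z :=
  (hasDerivAt_linear c d z).cexp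

lemma hasDerivAt_rwP1z (a b s z : ℂ) :
    HasDerivAt (fun w => rwP1 a b w s) (rwP1z a b z s) z := by
  have h := hasDerivAt_quadratic (16*Complex.I*b^4 + 16*Complex.I*a^2*b^2)
    (-(128*Complex.I*b^6*s) + 128*Complex.I*b^2*a^4*s + 8*b^2)
    (96*s*a^2*b^2 + 256*Complex.I*b^2*s^2*a^6 - 3*Complex.I + 256*Complex.I*b^8*s^2) z
  have e : (fun w : ℂ => (16*Complex.I*b^4 + 16*Complex.I*a^2*b^2)*w^2
      + (-(128*Complex.I*b^6*s) + 128*Complex.I*b^2*a^4*s + 8*b^2)*w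
      + (96*s*a^2*b^2 + 256*Complex.I*b^2*s^2*a^6 - 3*Complex.I + 256*Complex.I*b^8*s^2))
      = fun w => rwP1 a b w s := by
    funext w; simp only [rwP1]; ring
  rw [e] at h
  convert h using 1
  simp only [rwP1z]; ring

lemma hasDerivAt_rwP2z (a b s z : ℂ) :
    HasDerivAt (fun w => rwP2 a b w s) (rwP2z a b z s) z := by
  have h := hasDerivAt_quadratic (16*Complex.I*a^2*b^2 + 16*Complex.I*b^4)
    (128*Complex.I*b^2*a^4*s - 128*Complex.I*b^6*s - 8*b^2)
    (256*Complex.I*b^2*s^2*a^6 + 256*Complex.I*b^8*s^2 - 32*s*a^2*b^2 + Complex.I + 64*s*b^4) z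
  have e : (fun w : ℂ => (16*Complex.I*a^2*b^2 + 16*Complex.I*b^4)*w^2
      + (128*Complex.I*b^2*a^4*s - 128*Complex.I*b^6*s - 8*b^2)*w
      + (256*Complex.I*b^2*s^2*a^6 + 256*Complex.I*b^8*s^2 - 32*s*a^2*b^2 + Complex.I + 64*s*b^4))
      = fun w => rwP2 a b w s := by
    funext w; simp only [rwP2]; ring
  rw [e] at h
  convert h using 1
  simp only [rwP2z]; ring

lemma hasDerivAt_rwP1s (a b z s : ℂ) :
    HasDerivAt (fun u => rwP1 a b z u) (rwP1s a b z s) s := by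
  have h := hasDerivAt_quadratic (256*Complex.I*b^2*a^6 + 256*Complex.I*b^8)
    (-(128*Complex.I*b^6*z) + 128*Complex.I*b^2*a^4*z + 96*a^2*b^2)
    (16*Complex.I*b^4*z^2 + 16*Complex.I*a^2*b^2*z^2 + 8*b^2*z - 3*Complex.I) s
  have e : (fun u : ℂ => (256*Complex.I*b^2*a^6 + 256*Complex.I*b^8)*u^2
      + (-(128*Complex.I*b^6*z) + 128*Complex.I*b^2*a^4*z + 96*a^2*b^2)*u
      + (16*Complex.I*b^4*z^2 + 16*Complex.I*a^2*b^2*z^2 + 8*b^2*z - 3*Complex.I))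
      = fun u => rwP1 a b z u := by
    funext u; simp only [rwP1]; ring
  rw [e] at h
  convert h using 1
  simp only [rwP1s]; ring

lemma hasDerivAt_rwP2s (a b z s : ℂ) :
    HasDerivAt (fun u => rwP2 a b z u) (rwP2s a b z s) s := by
  have h := hasDerivAt_quadratic (256*Complex.I*b^2*a^6 + 256*Complex.I*b^8)
    (128*Complex.I*b^2*a^4*z - 128*Complex.I*b^6*z - 32*a^2*b^2 + 64*b^4)
    (16*Complex.I*a^2*b^2*z^2 + 16*Complex.I*b^4*z^2 - 8*b^2*z + Complex.I) s
  have e : (fun u : ℂ => (256*Complex.I*b^2*a^6 + 256*Complex.I*b^8)*u^2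
      + (128*Complex.I*b^2*a^4*z - 128*Complex.I*b^6*z - 32*a^2*b^2 + 64*b^4)*u
      + (16*Complex.I*a^2*b^2*z^2 + 16*Complex.I*b^4*z^2 - 8*b^2*z + Complex.I))
      = fun u => rwP2 a b z u := by
    funext u; simp only [rwP2]; ring
  rw [e] at h
  convert h using 1
  simp only [rwP2s]; ring

lemma hasDerivAt_rwP1zz (a b s z : ℂ) :
    HasDerivAt (fun w => rwP1z a b w s) (32*Complex.I*b^4 + 32*Complex.I*a^2*b^2) z := by
  have h := hasDerivAt_linear (32*Complex.I*b^4 + 32*Complex.I*a^2*b^2)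
    (-(128*Complex.I*b^6*s) + 128*Complex.I*b^2*a^4*s + 8*b^2) z
  have e : (fun w : ℂ => (32*Complex.I*b^4 + 32*Complex.I*a^2*b^2)*w
      + (-(128*Complex.I*b^6*s) + 128*Complex.I*b^2*a^4*s + 8*b^2))
      = fun w => rwP1z a b w s := by
    funext w; simp only [rwP1z]; ring
  rwa [e] at h

lemma hasDerivAt_rwP2zz (a b s z : ℂ) :
    HasDerivAt (fun w => rwP2z a b w s) (32*Complex.I*a^2*b^2 + 32*Complex.I*b^4) z := by
  have h := hasDerivAt_linear (32*Complex.I*a^2*b^2 + 32*Complex.I*b^4)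
    (128*Complex.I*b^2*a^4*s - 128*Complex.I*b^6*s - 8*b^2) z
  have e : (fun w : ℂ => (32*Complex.I*a^2*b^2 + 32*Complex.I*b^4)*w
      + (128*Complex.I*b^2*a^4*s - 128*Complex.I*b^6*s - 8*b^2))
      = fun w => rwP2z a b w s := by
    funext w; simp only [rwP2z]; ring
  rwa [e] at h

lemma hasDerivAt_rwE (a b s z : ℂ) :
    HasDerivAt (fun w => rwE a b w s) (rwE a b z s * (-2*Complex.I*a^2)) z := by
  have e : (fun w : ℂ => rwE a b w s)
      = fun w => Complex.exp ((-2*Complex.I*a^2)*w + (-2*Complex.I*a^2)*(2*s*a^2 - 4*s*b^2)) := by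
    funext w; unfold rwE; exact congrArg Complex.exp (by ring)
  have e2 : rwE a b z s
      = Complex.exp ((-2*Complex.I*a^2)*z + (-2*Complex.I*a^2)*(2*s*a^2 - 4*s*b^2)) := by
    unfold rwE; exact congrArg Complex.exp (by ring)
  rw [e, e2]
  exact hasDerivAt_expLin _ _ z

lemma hasDerivAt_rwEs (a b z s : ℂ) :
    HasDerivAt (fun u => rwE a b z u) (rwE a b z s * (-2*Complex.I*a^2*(2*a^2 - 4*b^2))) s := by
  have e : (fun u : ℂ => rwE a b z u)
      = fun u => Complex.exp ((-2*Complex.I*a^2*(2*a^2 - 4*b^2))*u + (-2*Complex.I*a^2)*z) := by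
    funext u; unfold rwE; exact congrArg Complex.exp (by ring)
  have e2 : rwE a b z s
      = Complex.exp ((-2*Complex.I*a^2*(2*a^2 - 4*b^2))*s + (-2*Complex.I*a^2)*z) := by
    unfold rwE; exact congrArg Complex.exp (by ring)
  rw [e, e2]
  exact hasDerivAt_expLin _ _ s

lemma hasDerivAt_rwR (a b s z : ℂ) (h : rwP2 a b z s ≠ 0) :
    HasDerivAt (fun w => rwR a b w s) (rwRz a b z s) z := by
  have h0 := ((((hasDerivAt_rwP1z a b s z).div (hasDerivAt_rwP2z a b s z) h).neg).mul_const
    (2:ℂ)).mul_const b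
  exact h0

lemma hasDerivAt_rwRs (a b z s : ℂ) (h : rwP2 a b z s ≠ 0) :
    HasDerivAt (fun u => rwR a b z u) (rwRs a b z s) s := by
  have h0 := ((((hasDerivAt_rwP1s a b z s).div (hasDerivAt_rwP2s a b z s) h).neg).mul_const
    (2:ℂ)).mul_const b
  exact h0

lemma hasDerivAt_rwRz (a b s z : ℂ) (h : rwP2 a b z s ≠ 0) :
    HasDerivAt (fun w => rwRz a b w s) (rwRzz a b z s) z := by
  have hn : HasDerivAt
      (fun w => rwP1z a b w s * rwP2 a b w s - rwP1 a b w s * rwP2z a b w s)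
      ((32*Complex.I*b^4 + 32*Complex.I*a^2*b^2) * rwP2 a b z s
        + rwP1z a b z s * rwP2z a b z s
        - (rwP1z a b z s * rwP2z a b z s
          + rwP1 a b z s * (32*Complex.I*a^2*b^2 + 32*Complex.I*b^4))) z :=
    ((hasDerivAt_rwP1zz a b s z).mul (hasDerivAt_rwP2z a b s z)).sub
      ((hasDerivAt_rwP1z a b s z).mul (hasDerivAt_rwP2zz a b s z))
  have hd : HasDerivAt (fun w => (rwP2 a b w s)^2)
      ((2:ℕ) * rwP2 a b z s ^ (2-1) * rwP2z a b z s) z := (hasDerivAt_rwP2z a b s z).pow 2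
  have h0 := (((hn.div hd (pow_ne_zero 2 h)).neg).mul_const (2:ℂ)).mul_const b
  refine h0.congr_deriv ?_
  simp only [rwRzz]
  push_cast
  field_simp
  ring

lemma hasDerivAt_rwQ (a b s z : ℂ) (h : rwP2 a b z s ≠ 0) :
    HasDerivAt (fun w => rwQ a b w s) (rwQz a b z s) z := by
  have h0 := (hasDerivAt_rwR a b s z h).mul (hasDerivAt_rwE a b s z)
  refine h0.congr_deriv ?_
  simp only [rwQz]; ring

lemma hasDerivAt_rwQt (a b z s : ℂ) (h : rwP2 a b z s ≠ 0) :
    HasDerivAt (fun u => rwQ a b z u) (rwQt a b z s) s := by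
  have h0 := (hasDerivAt_rwRs a b z s h).mul (hasDerivAt_rwEs a b z s)
  refine h0.congr_deriv ?_
  simp only [rwQt]; ring

lemma hasDerivAt_rwQz' (a b s z : ℂ) (h : rwP2 a b z s ≠ 0) :
    HasDerivAt (fun w => rwQz a b w s) (rwQzz a b z s) z := by
  have h1 := (hasDerivAt_rwRz a b s z h).add
    ((hasDerivAt_rwR a b s z h).mul_const (-2*Complex.I*a^2))
  have h0 := h1.mul (hasDerivAt_rwE a b s z)
  refine h0.congr_deriv ?_
  simp only [rwQzz, Pi.add_apply]; ring

lemma rwNUM_eq_zero (a b z s : ℂ) : rwNUM a b z s = 0 := by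
  simp only [rwNUM, rwP1, rwP2, rwP1z, rwP2z, rwP1s, rwP2s, rwP1c, rwP2c]
  linear_combination (256*b^4*Complex.I^2 + 2048*b^6*z*Complex.I - 4096*b^6*z*Complex.I^3 - 24576*b^8*s*Complex.I + 16384*b^8*s*Complex.I^3 - 65536*b^10*z*s - 32768*b^10*z^3*Complex.I + 65536*b^10*z^3*Complex.I^3 + 524288*b^12*s^2 + 917504*b^12*z^2*s*Complex.I - 786432*b^12*z^2*s*Complex.I^3 - 65536*b^12*z^4*Complex.I^2 - 5767168*b^14*z*s^2*Complex.I + 3145728*b^14*z*s^2*Complex.I^3 + 1048576*b^14*z^3*s*Complex.I^2 + 10485760*b^16*s^3*Complex.I - 4194304*b^16*s^3*Complex.I^3 - 6291456*b^16*z^2*s^2*Complex.I^2 + 16777216*b^18*z*s^3*Complex.I^2 - 16777216*b^20*s^4*Complex.I^2 - 192*a^2*b^2*Complex.I^4 - 2048*a^2*b^4*z*Complex.I^3 - 14336*a^2*b^6*s*Complex.I^3 - 4096*a^2*b^6*z^2*Complex.I^2 + 1024*a^2*b^6*z^2*Complex.I^4 - 65536*a^2*b^8*z*s + 131072*a^2*b^8*z*s*Complex.I^2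 - 8192*a^2*b^8*z*s*Complex.I^4 - 32768*a^2*b^8*z^3*Complex.I + 98304*a^2*b^8*z^3*Complex.I^3 + 262144*a^2*b^10*s^2 - 786432*a^2*b^10*s^2*Complex.I^2 + 16384*a^2*b^10*s^2*Complex.I^4 + 786432*a^2*b^10*z^2*s*Complex.I - 327680*a^2*b^10*z^2*s*Complex.I^3 - 65536*a^2*b^10*z^4*Complex.I^2 + 49152*a^2*b^10*z^4*Complex.I^4 - 1048576*a^2*b^12*z*s^2*Complex.I^3 - 524288*a^2*b^12*z^3*s*Complex.I^2 - 786432*a^2*b^12*z^3*s*Complex.I^4 - 4194304*a^2*b^14*s^3*Complex.I + 3145728*a^2*b^14*s^3*Complex.I^3 + 11534336*a^2*b^14*z^2*s^2*Complex.I^2 + 4718592*a^2*b^14*z^2*s^2*Complex.I^4 - 1572864*a^2*b^14*z^4*s*Complex.I^3 - 262144*a^2*b^14*z^6*Complex.I^4 - 50331648*a^2*b^16*z*s^3*Complex.I^2 - 12582912*a^2*b^16*z*s^3*Complex.I^4 + 25165824*a^2*b^16*z^3*s^2*Complex.I^3 + 6291456*a^2*b^16*z^5*s*Complex.I^4 +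 67108864*a^2*b^18*s^4*Complex.I^2 + 12582912*a^2*b^18*s^4*Complex.I^4 - 150994944*a^2*b^18*z^2*s^3*Complex.I^3 - 62914560*a^2*b^18*z^4*s^2*Complex.I^4 + 402653184*a^2*b^20*z*s^4*Complex.I^3 + 335544320*a^2*b^20*z^3*s^3*Complex.I^4 - 402653184*a^2*b^22*s^5*Complex.I^3 - 1006632960*a^2*b^22*z^2*s^4*Complex.I^4 + 1610612736*a^2*b^24*z*s^5*Complex.I^4 - 1073741824*a^2*b^26*s^6*Complex.I^4 - 6144*a^4*b^4*s*Complex.I^3 + 1024*a^4*b^4*z^2*Complex.I^4 + 32768*a^4*b^6*z*s*Complex.I^2 + 32768*a^4*b^6*z^3*Complex.I^3 - 262144*a^4*b^8*s^2 - 131072*a^4*b^8*z^2*s*Complex.I + 786432*a^4*b^8*z^2*s*Complex.I^3 + 98304*a^4*b^8*z^4*Complex.I^4 + 6291456*a^4*b^10*z*s^2*Complex.I - 2621440*a^4*b^10*z*s^2*Complex.I^3 - 1572864*a^4*b^10*z^3*s*Complex.I^2 - 786432*a^4*b^10*z^3*s*Complex.I^4 + 1048576*a^4*b^12*s^3*Complex.I^3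 + 4194304*a^4*b^12*z^2*s^2*Complex.I^2 + 1572864*a^4*b^12*z^2*s^2*Complex.I^4 - 4718592*a^4*b^12*z^4*s*Complex.I^3 - 786432*a^4*b^12*z^6*Complex.I^4 + 25165824*a^4*b^14*z*s^3*Complex.I^2 + 50331648*a^4*b^14*z^3*s^2*Complex.I^3 + 12582912*a^4*b^14*z^5*s*Complex.I^4 - 67108864*a^4*b^16*s^4*Complex.I^2 - 201326592*a^4*b^16*z^2*s^3*Complex.I^3 - 75497472*a^4*b^16*z^4*s^2*Complex.I^4 + 402653184*a^4*b^18*z*s^4*Complex.I^3 + 201326592*a^4*b^18*z^3*s^3*Complex.I^4 - 402653184*a^4*b^20*s^5*Complex.I^3 - 201326592*a^4*b^20*z^2*s^4*Complex.I^4 + 8192*a^6*b^4*z*s*Complex.I^4 + 196608*a^6*b^6*s^2*Complex.I^2 + 327680*a^6*b^6*z^2*s*Complex.I^3 + 49152*a^6*b^6*z^4*Complex.I^4 + 524288*a^6*b^8*z*s^2*Complex.I + 2621440*a^6*b^8*z*s^2*Complex.I^3 + 786432*a^6*b^8*z^3*s*Complex.I^4 + 16777216*a^6*b^10*s^3*Complex.I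 - 4194304*a^6*b^10*s^3*Complex.I^3 - 13631488*a^6*b^10*z^2*s^2*Complex.I^2 - 6291456*a^6*b^10*z^2*s^2*Complex.I^4 - 4718592*a^6*b^10*z^4*s*Complex.I^3 - 786432*a^6*b^10*z^6*Complex.I^4 + 41943040*a^6*b^12*z*s^3*Complex.I^2 + 12582912*a^6*b^12*z*s^3*Complex.I^4 - 16777216*a^6*b^14*s^4*Complex.I^2 + 150994944*a^6*b^14*z^2*s^3*Complex.I^3 + 88080384*a^6*b^14*z^4*s^2*Complex.I^4 - 402653184*a^6*b^16*z*s^4*Complex.I^3 - 603979776*a^6*b^16*z^3*s^3*Complex.I^4 + 1610612736*a^6*b^18*z^2*s^4*Complex.I^4 - 1610612736*a^6*b^20*z*s^5*Complex.I^4 + 16384*a^8*b^4*s^2*Complex.I^4 + 1048576*a^8*b^6*z*s^2*Complex.I^3 + 786432*a^8*b^6*z^3*s*Complex.I^4 + 2097152*a^8*b^8*s^3*Complex.I + 3145728*a^8*b^8*s^3*Complex.I^3 + 1572864*a^8*b^8*z^2*s^2*Complex.I^4 - 1572864*a^8*b^8*z^4*s*Complex.I^3 - 262144*a^8*b^8*z^6*Complex.I^4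 - 50331648*a^8*b^10*z*s^3*Complex.I^2 - 12582912*a^8*b^10*z*s^3*Complex.I^4 - 50331648*a^8*b^10*z^3*s^2*Complex.I^3 - 12582912*a^8*b^10*z^5*s*Complex.I^4 + 67108864*a^8*b^12*s^4*Complex.I^2 + 25165824*a^8*b^12*s^4*Complex.I^4 + 150994944*a^8*b^12*z^2*s^3*Complex.I^3 + 88080384*a^8*b^12*z^4*s^2*Complex.I^4 - 805306368*a^8*b^16*s^5*Complex.I^3 - 1207959552*a^8*b^16*z^2*s^4*Complex.I^4 + 3221225472*a^8*b^18*z*s^5*Complex.I^4 - 3221225472*a^8*b^20*s^6*Complex.I^4 + 1048576*a^10*b^6*s^3*Complex.I^3 + 4718592*a^10*b^6*z^2*s^2*Complex.I^4 - 25165824*a^10*b^8*z^3*s^2*Complex.I^3 - 6291456*a^10*b^8*z^5*s*Complex.I^4 - 67108864*a^10*b^10*s^4*Complex.I^2 - 201326592*a^10*b^10*z^2*s^3*Complex.I^3 - 75497472*a^10*b^10*z^4*s^2*Complex.I^4 + 402653184*a^10*b^12*z*s^4*Complex.I^3 + 603979776*a^10*b^12*z^3*s^3*Complex.I^4 - 805306368*a^10*b^14*s^5*Complex.I^3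 - 1207959552*a^10*b^14*z^2*s^4*Complex.I^4 + 12582912*a^12*b^6*z*s^3*Complex.I^4 - 150994944*a^12*b^8*z^2*s^3*Complex.I^3 - 62914560*a^12*b^8*z^4*s^2*Complex.I^4 - 402653184*a^12*b^10*z*s^4*Complex.I^3 - 201326592*a^12*b^10*z^3*s^3*Complex.I^4 + 1610612736*a^12*b^12*z^2*s^4*Complex.I^4 - 3221225472*a^12*b^14*z*s^5*Complex.I^4 + 12582912*a^14*b^6*s^4*Complex.I^4 - 402653184*a^14*b^8*z*s^4*Complex.I^3 - 335544320*a^14*b^8*z^3*s^3*Complex.I^4 - 402653184*a^14*b^10*s^5*Complex.I^3 - 201326592*a^14*b^10*z^2*s^4*Complex.I^4 + 1610612736*a^14*b^12*z*s^5*Complex.I^4 - 3221225472*a^14*b^14*s^6*Complex.I^4 - 402653184*a^16*b^8*s^5*Complex.I^3 - 1006632960*a^16*b^8*z^2*s^4*Complex.I^4 - 1610612736*a^18*b^8*z*s^5*Complex.I^4 - 1073741824*a^20*b^8*s^6*Complex.I^4) * Complex.I_sq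

lemma rwExpand (a b z s : ℂ) (h2 : rwP2 a b z s ≠ 0) (h2c : rwP2c a b z s ≠ 0) :
    (Complex.I * rwQt a b z s + rwQzz a b z s
      + Complex.I * (4*b^2 * (rwP1 a b z s * rwP1c a b z s) / (rwP2 a b z s * rwP2c a b z s))
        * rwQz a b z s) * ((rwP2 a b z s)^3 * rwP2c a b z s)
      = (-2*b) * rwNUM a b z s * rwE a b z s := by
  have hu : rwP2 a b z s * (rwP2 a b z s)⁻¹ = 1 := mul_inv_cancel₀ h2
  have hv : rwP2c a b z s * (rwP2c a b z s)⁻¹ = 1 := mul_inv_cancel₀ h2c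
  simp only [rwQt, rwQzz, rwQz, rwRs, rwRzz, rwRz, rwR, rwNUM]
  linear_combination
    ((4*(rwP2 a b z s)*(rwP1z a b z s)*(rwP2z a b z s)*(rwP2c a b z s)*b*(rwE a b z s) - 64*(rwP2 a b z s)^2*(rwP2c a b z s)*b^5*(rwE a b z s)*Complex.I - 64*(rwP2 a b z s)^2*(rwP2c a b z s)*a^2*b^3*(rwE a b z s)*Complex.I - 2*(rwP2 a b z s)^2*(rwP1s a b z s)*(rwP2c a b z s)*b*(rwE a b z s)*Complex.I + 8*(rwP2 a b z s)^2*(rwP1z a b z s)*(rwP2c a b z s)*a^2*b*(rwE a b z s)*Complex.I + 4*(rwP2 a b z s)^2*(rwP1z a b z s)*(rwP2z a b z s)*(rwP2c a b z s)*b*(rwE a b z s)*((rwP2 a b z s)⁻¹) - 64*(rwP2 a b z s)^3*(rwP2c a b z s)*b^5*(rwE a b z s)*Complex.I*((rwP2 a b z s)⁻¹) - 64*(rwP2 a b z s)^3*(rwP2c a b z s)*a^2*b^3*(rwE a b z s)*Complex.I*((rwP2 a b z s)⁻¹) - 2*(rwP2 a b z s)^3*(rwP1s a b z s)*(rwP2c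 a b z s)*b*(rwE a b z s)*Complex.I*((rwP2 a b z s)⁻¹) + 8*(rwP2 a b z s)^3*(rwP1z a b z s)*(rwP2c a b z s)*a^2*b*(rwE a b z s)*Complex.I*((rwP2 a b z s)⁻¹) + 4*(rwP2 a b z s)^3*(rwP1z a b z s)*(rwP2z a b z s)*(rwP2c a b z s)*b*(rwE a b z s)*((rwP2 a b z s)⁻¹)^2 - 64*(rwP2 a b z s)^4*(rwP2c a b z s)*b^5*(rwE a b z s)*Complex.I*((rwP2 a b z s)⁻¹)^2 - 64*(rwP2 a b z s)^4*(rwP2c a b z s)*a^2*b^3*(rwE a b z s)*Complex.I*((rwP2 a b z s)⁻¹)^2 - 4*(rwP1 a b z s)*(rwP2z a b z s)^2*(rwP2c a b z s)*b*(rwE a b z s) + 64*(rwP1 a b z s)*(rwP2 a b z s)*(rwP2c a b z s)*b^5*(rwE a b z s)*Complex.I + 64*(rwP1 a b z s)*(rwP2 a b z s)*(rwP2c a b z s)*a^2*b^3*(rwE a b z s)*Complex.I + 2*(rwP1 a b z s)*(rwP2 a b z s)*(rwP2s a b z s)*(rwP2c a b z s)*b*(rwE a b z s)*Complex.I - 8*(rwP1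 a b z s)*(rwP2 a b z s)*(rwP2z a b z s)*(rwP2c a b z s)*a^2*b*(rwE a b z s)*Complex.I - 4*(rwP1 a b z s)*(rwP2 a b z s)*(rwP2z a b z s)^2*(rwP2c a b z s)*b*(rwE a b z s)*((rwP2 a b z s)⁻¹) - 8*(rwP1 a b z s)*(rwP2 a b z s)*(rwP1z a b z s)*(rwP1c a b z s)*(rwP2c a b z s)*b^3*(rwE a b z s)*Complex.I*((rwP2c a b z s)⁻¹) + 64*(rwP1 a b z s)*(rwP2 a b z s)^2*(rwP2c a b z s)*b^5*(rwE a b z s)*Complex.I*((rwP2 a b z s)⁻¹) + 64*(rwP1 a b z s)*(rwP2 a b z s)^2*(rwP2c a b z s)*a^2*b^3*(rwE a b z s)*Complex.I*((rwP2 a b z s)⁻¹) - 16*(rwP1 a b z s)*(rwP2 a b z s)^2*(rwP2c a b z s)*a^2*b^3*(rwE a b z s)*Complex.I^2 + 2*(rwP1 a b z s)*(rwP2 a b z s)^2*(rwP2s a b z s)*(rwP2c a b z s)*b*(rwE a b z s)*Complex.I*((rwP2 a b z s)⁻¹) - 8*(rwP1 a b z s)*(rwP2 a b z s)^2*(rwP2z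 a b z s)*(rwP2c a b z s)*a^2*b*(rwE a b z s)*Complex.I*((rwP2 a b z s)⁻¹) - 4*(rwP1 a b z s)*(rwP2 a b z s)^2*(rwP2z a b z s)^2*(rwP2c a b z s)*b*(rwE a b z s)*((rwP2 a b z s)⁻¹)^2 - 8*(rwP1 a b z s)*(rwP2 a b z s)^2*(rwP1z a b z s)*(rwP1c a b z s)*(rwP2c a b z s)*b^3*(rwE a b z s)*Complex.I*((rwP2 a b z s)⁻¹)*((rwP2c a b z s)⁻¹) + 64*(rwP1 a b z s)*(rwP2 a b z s)^3*(rwP2c a b z s)*b^5*(rwE a b z s)*Complex.I*((rwP2 a b z s)⁻¹)^2 + 64*(rwP1 a b z s)*(rwP2 a b z s)^3*(rwP2c a b z s)*a^2*b^3*(rwE a b z s)*Complex.I*((rwP2 a b z s)⁻¹)^2 - 8*(rwP1 a b z s)*(rwP2 a b z s)^3*(rwP1z a b z s)*(rwP1c a b z s)*(rwP2c a b z s)*b^3*(rwE a b z s)*Complex.I*((rwP2 a b z s)⁻¹)^2*((rwP2c a b z s)⁻¹) + 8*(rwP1 a b z s)^2*(rwP2z a b z s)*(rwP1c a b z s)*(rwP2c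 a b z s)*b^3*(rwE a b z s)*Complex.I*((rwP2c a b z s)⁻¹) + 16*(rwP1 a b z s)^2*(rwP2 a b z s)*(rwP1c a b z s)*(rwP2c a b z s)*a^2*b^3*(rwE a b z s)*Complex.I^2*((rwP2c a b z s)⁻¹) + 8*(rwP1 a b z s)^2*(rwP2 a b z s)*(rwP2z a b z s)*(rwP1c a b z s)*(rwP2c a b z s)*b^3*(rwE a b z s)*Complex.I*((rwP2 a b z s)⁻¹)*((rwP2c a b z s)⁻¹) + 16*(rwP1 a b z s)^2*(rwP2 a b z s)^2*(rwP1c a b z s)*(rwP2c a b z s)*a^2*b^3*(rwE a b z s)*Complex.I^2*((rwP2 a b z s)⁻¹)*((rwP2c a b z s)⁻¹) + 8*(rwP1 a b z s)^2*(rwP2 a b z s)^2*(rwP2z a b z s)*(rwP1c a b z s)*(rwP2c a b z s)*b^3*(rwE a b z s)*Complex.I*((rwP2 a b z s)⁻¹)^2*((rwP2c a b z s)⁻¹))) * hu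
    + ((-8*(rwP1 a b z s)*(rwP2 a b z s)*(rwP1z a b z s)*(rwP1c a b z s)*b^3*(rwE a b z s)*Complex.I + 8*(rwP1 a b z s)^2*(rwP2z a b z s)*(rwP1c a b z s)*b^3*(rwE a b z s)*Complex.I + 16*(rwP1 a b z s)^2*(rwP2 a b z s)*(rwP1c a b z s)*a^2*b^3*(rwE a b z s)*Complex.I^2)) * hv

/-- The first-order rogue wave
`q = −(L₁/L₂) · 2β₁ exp(−2iα₁²(x + 2tα₁² − 4tβ₁²))` solves the DNLSII equation
wherever `L₂ ≠ 0`. -/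
theorem first_order_rogue_wave_solves_dnlsII (α₁ β₁ : ℝ) (hβ : β₁ ≠ 0)
    (L₁ L₂ : ℝ → ℝ → ℂ) (q : ℝ → ℝ → ℂ)
    (hL₁ : ∀ x t : ℝ, L₁ x t =
      16 * Complex.I * (β₁:ℂ)^4 * (x:ℂ)^2 + 16 * Complex.I * (α₁:ℂ)^2 * (β₁:ℂ)^2 * (x:ℂ)^2
      - 128 * Complex.I * (β₁:ℂ)^6 * (x:ℂ) * (t:ℂ)
      + 128 * Complex.I * (β₁:ℂ)^2 * (α₁:ℂ)^4 * (t:ℂ) * (x:ℂ)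
      + 8 * (β₁:ℂ)^2 * (x:ℂ) + 96 * (t:ℂ) * (α₁:ℂ)^2 * (β₁:ℂ)^2
      + 256 * Complex.I * (β₁:ℂ)^2 * (t:ℂ)^2 * (α₁:ℂ)^6 - 3 * Complex.I
      + 256 * Complex.I * (β₁:ℂ)^8 * (t:ℂ)^2)
    (hL₂ : ∀ x t : ℝ, L₂ x t =
      16 * Complex.I * (α₁:ℂ)^2 * (β₁:ℂ)^2 * (x:ℂ)^2 + 16 * Complex.I * (β₁:ℂ)^4 * (x:ℂ)^2
      + 128 * Complex.I * (β₁:ℂ)^2 * (α₁:ℂ)^4 * (x:ℂ) * (t:ℂ)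
      - 128 * Complex.I * (β₁:ℂ)^6 * (x:ℂ) * (t:ℂ) - 8 * (β₁:ℂ)^2 * (x:ℂ)
      + 256 * Complex.I * (β₁:ℂ)^2 * (t:ℂ)^2 * (α₁:ℂ)^6
      + 256 * Complex.I * (β₁:ℂ)^8 * (t:ℂ)^2 - 32 * (t:ℂ) * (α₁:ℂ)^2 * (β₁:ℂ)^2
      + Complex.I + 64 * (t:ℂ) * (β₁:ℂ)^4)
    (hq : ∀ x t : ℝ, q x t = -(L₁ x t / L₂ x t) * 2 * (β₁:ℂ) *
      Complex.exp (-2 * Complex.I * (α₁:ℂ)^2 * ((x:ℂ) + 2 * (t:ℂ) * (α₁:ℂ)^2 - 4 * (t:ℂ) * (β₁:ℂ)^2))) :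
    ∀ x t : ℝ, L₂ x t ≠ 0 →
      Complex.I * pt q x t + px (px q) x t
        + Complex.I * ((‖q x t‖ : ℝ) : ℂ)^2 * px q x t = 0 := by
  intro x t hne
  have hL1eq : ∀ x' t' : ℝ, L₁ x' t' = rwP1 (α₁:ℂ) (β₁:ℂ) (x':ℂ) (t':ℂ) := by
    intro x' t'; rw [hL₁]; simp only [rwP1]
  have hL2eq : ∀ x' t' : ℝ, L₂ x' t' = rwP2 (α₁:ℂ) (β₁:ℂ) (x':ℂ) (t':ℂ) := by
    intro x' t'; rw [hL₂]; simp only [rwP2]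
  have h2 : rwP2 (α₁:ℂ) (β₁:ℂ) (x:ℂ) (t:ℂ) ≠ 0 := by
    rw [← hL2eq]; exact hne
  have hqQ : ∀ x' t' : ℝ, q x' t' = rwQ (α₁:ℂ) (β₁:ℂ) (x':ℂ) (t':ℂ) := by
    intro x' t'
    rw [hq, hL1eq, hL2eq]
    simp only [rwQ, rwR, rwE]
  -- first x-derivative
  have hpx : ∀ u : ℝ, rwP2 (α₁:ℂ) (β₁:ℂ) (u:ℂ) (t:ℂ) ≠ 0 →
      px q u t = rwQz (α₁:ℂ) (β₁:ℂ) (u:ℂ) (t:ℂ) := by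
    intro u hu
    have hd := (hasDerivAt_rwQ (α₁:ℂ) (β₁:ℂ) (t:ℂ) (u:ℂ) hu).comp_ofReal
    have hfun : (fun x' : ℝ => q x' t) = fun x' : ℝ => rwQ (α₁:ℂ) (β₁:ℂ) (x':ℂ) (t:ℂ) :=
      funext fun x' => hqQ x' t
    show deriv (fun x' : ℝ => q x' t) u = _
    rw [hfun]
    exact hd.deriv
  -- t-derivative
  have hpt : pt q x t = rwQt (α₁:ℂ) (β₁:ℂ) (x:ℂ) (t:ℂ) := by
    have hd := (hasDerivAt_rwQt (α₁:ℂ) (β₁:ℂ) (x:ℂ) (t:ℂ) h2).comp_ofReal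
    have hfun : (fun t' : ℝ => q x t') = fun t' : ℝ => rwQ (α₁:ℂ) (β₁:ℂ) (x:ℂ) (t':ℂ) :=
      funext fun t' => hqQ x t'
    show deriv (fun t' : ℝ => q x t') t = _
    rw [hfun]
    exact hd.deriv
  -- second x-derivative
  have hcont : Continuous fun u : ℝ => rwP2 (α₁:ℂ) (β₁:ℂ) (u:ℂ) (t:ℂ) := by
    simp only [rwP2]
    fun_prop
  have hev : ∀ᶠ u : ℝ in nhds x, rwP2 (α₁:ℂ) (β₁:ℂ) (u:ℂ) (t:ℂ) ≠ 0 :=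
    hcont.continuousAt.eventually_ne h2
  have hev2 : (fun u : ℝ => px q u t) =ᶠ[nhds x]
      (fun u : ℝ => rwQz (α₁:ℂ) (β₁:ℂ) (u:ℂ) (t:ℂ)) :=
    hev.mono fun u hu => hpx u hu
  have hpxx : px (px q) x t = rwQzz (α₁:ℂ) (β₁:ℂ) (x:ℂ) (t:ℂ) := by
    show deriv (fun x' : ℝ => px q x' t) x = _
    rw [hev2.deriv_eq]
    exact ((hasDerivAt_rwQz' (α₁:ℂ) (β₁:ℂ) (t:ℂ) (x:ℂ) h2).comp_ofReal).deriv
  -- conjugates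
  have hc1 : (starRingEnd ℂ) (rwP1 (α₁:ℂ) (β₁:ℂ) (x:ℂ) (t:ℂ)) = rwP1c (α₁:ℂ) (β₁:ℂ) (x:ℂ) (t:ℂ) := by
    simp only [rwP1, rwP1c, map_add, map_sub, map_mul, map_pow, map_neg, map_ofNat,
      Complex.conj_I, Complex.conj_ofReal]
    ring
  have hc2 : (starRingEnd ℂ) (rwP2 (α₁:ℂ) (β₁:ℂ) (x:ℂ) (t:ℂ)) = rwP2c (α₁:ℂ) (β₁:ℂ) (x:ℂ) (t:ℂ) := by
    simp only [rwP2, rwP2c, map_add, map_sub, map_mul, map_pow, map_neg, map_ofNat,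
      Complex.conj_I, Complex.conj_ofReal]
    ring
  have h2c : rwP2c (α₁:ℂ) (β₁:ℂ) (x:ℂ) (t:ℂ) ≠ 0 := by
    rw [← hc2]
    simpa using h2
  have hE1 : rwE (α₁:ℂ) (β₁:ℂ) (x:ℂ) (t:ℂ) * (starRingEnd ℂ) (rwE (α₁:ℂ) (β₁:ℂ) (x:ℂ) (t:ℂ)) = 1 := by
    unfold rwE
    rw [← Complex.exp_conj, ← Complex.exp_add]
    have : (starRingEnd ℂ) (-2 * Complex.I * (α₁:ℂ)^2 * ((x:ℂ) + 2 * (t:ℂ) * (α₁:ℂ)^2 - 4 * (t:ℂ) * (β₁:ℂ)^2))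
        = -(-2 * Complex.I * (α₁:ℂ)^2 * ((x:ℂ) + 2 * (t:ℂ) * (α₁:ℂ)^2 - 4 * (t:ℂ) * (β₁:ℂ)^2)) := by
      simp only [map_mul, map_neg, map_ofNat, map_add, map_sub, map_pow,
        Complex.conj_I, Complex.conj_ofReal]
      ring
    rw [this, add_neg_cancel, Complex.exp_zero]
  have hm : ((‖q x t‖ : ℝ) : ℂ)^2
      = 4*(β₁:ℂ)^2 * (rwP1 (α₁:ℂ) (β₁:ℂ) (x:ℂ) (t:ℂ) * rwP1c (α₁:ℂ) (β₁:ℂ) (x:ℂ) (t:ℂ))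
        / (rwP2 (α₁:ℂ) (β₁:ℂ) (x:ℂ) (t:ℂ) * rwP2c (α₁:ℂ) (β₁:ℂ) (x:ℂ) (t:ℂ)) := by
    have e1 : q x t * (starRingEnd ℂ) (q x t)
        = (4*(β₁:ℂ)^2 * (rwP1 (α₁:ℂ) (β₁:ℂ) (x:ℂ) (t:ℂ) * rwP1c (α₁:ℂ) (β₁:ℂ) (x:ℂ) (t:ℂ))
          / (rwP2 (α₁:ℂ) (β₁:ℂ) (x:ℂ) (t:ℂ) * rwP2c (α₁:ℂ) (β₁:ℂ) (x:ℂ) (t:ℂ)))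
          * (rwE (α₁:ℂ) (β₁:ℂ) (x:ℂ) (t:ℂ) * (starRingEnd ℂ) (rwE (α₁:ℂ) (β₁:ℂ) (x:ℂ) (t:ℂ))) := by
      rw [hqQ x t]
      simp only [rwQ, rwR, map_mul, map_neg, map_div₀, map_ofNat, Complex.conj_ofReal, hc1, hc2]
      field_simp
      ring
    rw [← Complex.ofReal_pow, Complex.sq_norm, ← Complex.mul_conj, e1, hE1, mul_one]
  have hD : (rwP2 (α₁:ℂ) (β₁:ℂ) (x:ℂ) (t:ℂ))^3 * rwP2c (α₁:ℂ) (β₁:ℂ) (x:ℂ) (t:ℂ) ≠ 0 :=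
    mul_ne_zero (pow_ne_zero 3 h2) h2c
  have hexp := rwExpand (α₁:ℂ) (β₁:ℂ) (x:ℂ) (t:ℂ) h2 h2c
  rw [rwNUM_eq_zero, mul_zero, zero_mul] at hexp
  rw [hpt, hpxx, hpx x h2, hm]
  exact (mul_eq_zero.mp hexp).resolve_right hD
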